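/- Let I be a finite interval with n_i ≤ |I_+| for all i, let λ ∈ Λ_{I;n,c}, and set κ := κ_{I;n,c}. Then the integer Σ_{j∈I_+} (k_j² − l_j²) is even and nonnegative, where k_j := #{i : κ_{ij} = 1} and l_j := #{i : λ_{ij} = 1}. (Hence the defect def(λ) := (1/2)·Σ_{j∈I_+}(k_j² − l_j²) is a natural number.) -/

import Mathlib

open Finset in
private lemma colsq_aux (S : Finset ℤ) (l : ℕ) (f : Fin l → ℤ → Bool) :
    ∑ j ∈ S, (((Finset.univ.filter (fun i : Fin l => f i j = true)).card : ℤ)) ^ 2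
      = ∑ i : Fin l, ∑ i' : Fin l,
          ((S.filter (fun j => f i j = true ∧ f i' j = true)).card : ℤ) := by
  have hcnt : ∀ j, (((Finset.univ.filter (fun i : Fin l => f i j = true)).card : ℤ))
      = ∑ i : Fin l, (if f i j = true then (1:ℤ) else 0) := by
    intro j
    rw [Finset.card_filter]
    push_cast
    rfl
  have h1 : ∀ j ∈ S, (((Finset.univ.filter (fun i : Fin l => f i j = true)).card : ℤ)) ^ 2
      = ∑ i : Fin l, ∑ i' : Fin l,
          (if f i j = true ∧ f i' j = true then (1:ℤ) else 0) := by
    intro j _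
    rw [sq, hcnt, Finset.sum_mul_sum]
    refine Finset.sum_congr rfl fun i _ => Finset.sum_congr rfl fun i' _ => ?_
    by_cases h : f i j = true <;> by_cases h' : f i' j = true <;> simp [h, h']
  rw [Finset.sum_congr rfl h1, Finset.sum_comm]
  refine Finset.sum_congr rfl fun i _ => ?_
  rw [Finset.sum_comm]
  refine Finset.sum_congr rfl fun i' _ => ?_
  rw [Finset.card_filter]
  push_cast
  rfl

open Finset in
private lemma colsum_aux (S : Finset ℤ) (l : ℕ) (f : Fin l → ℤ → Bool) :
    ∑ j ∈ S, (((Finset.univ.filter (fun i : Fin l => f i j = true)).card : ℤ))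
      = ∑ i : Fin l, ((S.filter (fun j => f i j = true)).card : ℤ) := by
  have h1 : ∀ j ∈ S, (((Finset.univ.filter (fun i : Fin l => f i j = true)).card : ℤ))
      = ∑ i : Fin l, (if f i j = true then (1:ℤ) else 0) := by
    intro j _
    rw [Finset.card_filter]
    push_cast
    rfl
  rw [Finset.sum_congr rfl h1, Finset.sum_comm]
  refine Finset.sum_congr rfl fun i _ => ?_
  rw [Finset.card_filter]
  push_cast
  rfl

private lemma cnt_aux (S : Finset ℤ) (g : ℤ → Bool) (d : Bool) :
    (S.filter (fun j => g j = true)).card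
      = cond d (S.card - (S.filter (fun j => g j ≠ d)).card)
          ((S.filter (fun j => g j ≠ d)).card) := by
  cases d
  · simp only [cond]
    congr 1
    apply Finset.filter_congr
    intro j _
    simp
  · simp only [cond]
    have h := Finset.card_filter_add_card_filter_not
      (s := S) (p := fun j => g j = true)
    have e : (S.filter (fun j => g j ≠ true)).card
        = (S.filter (fun j => ¬ (g j = true))).card := rfl
    omega

theorem stmt_2
    (l : ℕ) (hl : 1 ≤ l) (n : Fin l → ℕ) (c : Fin l → Bool)
    (a b : ℤ) (hab : a ≤ b)
    (hn : ∀ i, (n i : ℤ) ≤ b - a + 2)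
    (lam : Fin l → ℤ → Bool)
    (hlam : ∀ i, ((Finset.Icc a (b + 1)).filter (fun j => lam i j ≠ c i)).card = n i)
    (κ : Fin l → ℤ → Bool)
    (hκmem : ∀ i, ((Finset.Icc a (b + 1)).filter (fun j => κ i j ≠ c i)).card = n i)
    (hκdec : ∀ i, ∀ j ∈ Finset.Icc a (b + 1), ∀ j' ∈ Finset.Icc a (b + 1),
      j ≤ j' → κ i j' = true → κ i j = true) :
    0 ≤ (∑ j ∈ Finset.Icc a (b + 1),
        ((((Finset.univ.filter (fun i : Fin l => κ i j = true)).card : ℤ) ^ 2)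
          - (((Finset.univ.filter (fun i : Fin l => lam i j = true)).card : ℤ) ^ 2)))
    ∧ Even (∑ j ∈ Finset.Icc a (b + 1),
        ((((Finset.univ.filter (fun i : Fin l => κ i j = true)).card : ℤ) ^ 2)
          - (((Finset.univ.filter (fun i : Fin l => lam i j = true)).card : ℤ) ^ 2))) := by
  classical
  set S := Finset.Icc a (b + 1) with hS
  set A : Fin l → Finset ℤ := fun i => S.filter (fun j => κ i j = true) with hA
  set B : Fin l → Finset ℤ := fun i => S.filter (fun j => lam i j = true) with hB
  -- row counts agree
  have hcard : ∀ i, (B i).card = (A i).card := by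
    intro i
    show (S.filter (fun j => lam i j = true)).card = (S.filter (fun j => κ i j = true)).card
    rw [cnt_aux S (lam i) (c i), cnt_aux S (κ i) (c i), hlam i, hκmem i]
  -- downward closedness of A i
  have hdown : ∀ i, ∀ j' ∈ A i, ∀ j ∈ S, j ≤ j' → j ∈ A i := by
    intro i j' hj' j hj hle
    rw [hA, Finset.mem_filter] at hj' ⊢
    exact ⟨hj, hκdec i j hj j' hj'.1 hle hj'.2⟩
  -- nestedness
  have hnest : ∀ i i', (A i).card ≤ (A i').card → A i ⊆ A i' := by
    intro i i' hle j hj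
    by_contra hj'
    have hjS : j ∈ S := (Finset.mem_filter.mp hj).1
    have hjab : a ≤ j ∧ j ≤ b + 1 := Finset.mem_Icc.mp hjS
    have hsub1 : Finset.Icc a j ⊆ A i := by
      intro x hx
      have hx' := Finset.mem_Icc.mp hx
      exact hdown i j hj x (Finset.mem_Icc.mpr ⟨hx'.1, le_trans hx'.2 hjab.2⟩) hx'.2
    have hsub2 : A i' ⊆ Finset.Icc a (j - 1) := by
      intro x hx
      have hxS : x ∈ S := (Finset.mem_filter.mp hx).1
      have hx' := Finset.mem_Icc.mp hxS
      have hxj : x < j := by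
        by_contra hxn
        push_neg at hxn
        exact hj' (hdown i' x hx j hjS hxn)
      exact Finset.mem_Icc.mpr ⟨hx'.1, by omega⟩
    have c1 : (Finset.Icc a j).card ≤ (A i).card := Finset.card_le_card hsub1
    have c2 : (A i').card ≤ (Finset.Icc a (j - 1)).card := Finset.card_le_card hsub2
    rw [Int.card_Icc] at c1 c2
    omega
  -- per-pair inequality
  have hpair : ∀ i i' : Fin l,
      ((S.filter (fun j => lam i j = true ∧ lam i' j = true)).card : ℤ)
        ≤ ((S.filter (fun j => κ i j = true ∧ κ i' j = true)).card : ℤ) := by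
    intro i i'
    have eB : S.filter (fun j => lam i j = true ∧ lam i' j = true) = B i ∩ B i' := by
      rw [hB]; simp [Finset.filter_and]
    have eA : S.filter (fun j => κ i j = true ∧ κ i' j = true) = A i ∩ A i' := by
      rw [hA]; simp [Finset.filter_and]
    rw [eB, eA]
    rcases le_total ((A i).card) ((A i').card) with h | h
    · have hi : A i ∩ A i' = A i := Finset.inter_eq_left.mpr (hnest i i' h)
      rw [hi]
      have hc : (B i ∩ B i').card ≤ (B i).card :=
        Finset.card_le_card (Finset.inter_subset_left)
      exact_mod_cast le_trans hc (le_of_eq (hcard i))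
    · have hi : A i ∩ A i' = A i' := Finset.inter_eq_right.mpr (hnest i' i h)
      rw [hi]
      have hc : (B i ∩ B i').card ≤ (B i').card :=
        Finset.card_le_card (Finset.inter_subset_right)
      exact_mod_cast le_trans hc (le_of_eq (hcard i'))
  have hsplit : (∑ j ∈ S,
        ((((Finset.univ.filter (fun i : Fin l => κ i j = true)).card : ℤ) ^ 2)
          - (((Finset.univ.filter (fun i : Fin l => lam i j = true)).card : ℤ) ^ 2)))
      = (∑ j ∈ S, (((Finset.univ.filter (fun i : Fin l => κ i j = true)).card : ℤ) ^ 2))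
        - (∑ j ∈ S, (((Finset.univ.filter (fun i : Fin l => lam i j = true)).card : ℤ) ^ 2)) :=
    Finset.sum_sub_distrib _ _
  constructor
  · rw [hsplit, colsq_aux S l κ, colsq_aux S l lam]
    rw [sub_nonneg]
    exact Finset.sum_le_sum fun i _ => Finset.sum_le_sum fun i' _ => hpair i i'
  · -- evenness
    have hsum1 : (∑ j ∈ S, (((Finset.univ.filter (fun i : Fin l => κ i j = true)).card : ℤ)))
        = (∑ j ∈ S, (((Finset.univ.filter (fun i : Fin l => lam i j = true)).card : ℤ))) := by
      rw [colsum_aux S l κ, colsum_aux S l lam]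
      refine Finset.sum_congr rfl fun i _ => ?_
      exact_mod_cast (hcard i).symm
    have key : ∀ (x : ℤ), Even (x ^ 2 - x) := by
      intro x
      have hx : x ^ 2 - x = x * (x - 1) := by ring
      rw [hx]
      exact Int.even_mul_pred_self x
    have e1 : Even (∑ j ∈ S,
        (((((Finset.univ.filter (fun i : Fin l => κ i j = true)).card : ℤ)) ^ 2
          - (((Finset.univ.filter (fun i : Fin l => κ i j = true)).card : ℤ)))
        - ((((Finset.univ.filter (fun i : Fin l => lam i j = true)).card : ℤ)) ^ 2
          - (((Finset.univ.filter (fun i : Fin l => lam i j = true)).card : ℤ))))) := by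
      rw [even_iff_two_dvd]
      exact Finset.dvd_sum fun j _ => (even_iff_two_dvd).mp ((key _).sub (key _))
    have expand : (∑ j ∈ S,
        (((((Finset.univ.filter (fun i : Fin l => κ i j = true)).card : ℤ)) ^ 2
          - (((Finset.univ.filter (fun i : Fin l => κ i j = true)).card : ℤ)))
        - ((((Finset.univ.filter (fun i : Fin l => lam i j = true)).card : ℤ)) ^ 2
          - (((Finset.univ.filter (fun i : Fin l => lam i j = true)).card : ℤ)))))
        = (∑ j ∈ S,
        ((((Finset.univ.filter (fun i : Fin l => κ i j = true)).card : ℤ) ^ 2)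
          - (((Finset.univ.filter (fun i : Fin l => lam i j = true)).card : ℤ) ^ 2)))
        - ((∑ j ∈ S, (((Finset.univ.filter (fun i : Fin l => κ i j = true)).card : ℤ)))
          - (∑ j ∈ S, (((Finset.univ.filter (fun i : Fin l => lam i j = true)).card : ℤ)))) := by
      simp only [Finset.sum_sub_distrib]
      ring
    rw [expand, hsum1, sub_self, sub_zero] at e1
    exact e1
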